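/- Let μ be a probability measure on a state space 𝒮, let π, π' be Markov kernels from 𝒮 to a finite action set 𝒜, and f: 𝒮×𝒜 → [0, V]. Then E_{s∼μ}[Σ_a f(s,a)·(π'(a|s) − π(a|s))] ≤ V · sqrt( (1/2) · E_{s∼μ}[ KL(π'(·|s) ‖ π(·|s)) ] ). -/

import Mathlib

open MeasureTheory Finset

section Aux

noncomputable def Fphi (x : ℝ) : ℝ := x * Real.log x - x + 1 - 3*(x-1)^2/(2*(x+2))
noncomputable def Gphi (x : ℝ) : ℝ := Real.log x - 3*(x-1)*(x+5)/(2*(x+2)^2)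

lemma hasDerivAt_Fphi {x : ℝ} (hx : 0 < x) : HasDerivAt Fphi (Gphi x) x := by
  have h2 : (2*(x+2)) ≠ 0 := by positivity
  have h1 : HasDerivAt (fun x : ℝ => x * Real.log x) (Real.log x + 1) x := by
    have := (hasDerivAt_id x).mul (Real.hasDerivAt_log hx.ne')
    refine this.congr_deriv ?_
    field_simp
    simp only [id]; ring
  have h3 : HasDerivAt (fun x : ℝ => 3*(x-1)^2/(2*(x+2)))
      ((6*(x-1) * (2*(x+2)) - 3*(x-1)^2 * 2) / (2*(x+2))^2) x := by
    have hn : HasDerivAt (fun x : ℝ => 3*(x-1)^2) (6*(x-1)) x := by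
      have := (((hasDerivAt_id x).sub_const 1).pow 2).const_mul 3
      refine this.congr_deriv ?_
      simp; ring
    have hd : HasDerivAt (fun x : ℝ => 2*(x+2)) 2 x := by
      simpa using ((hasDerivAt_id x).add_const 2).const_mul 2
    exact hn.div hd h2
  have := ((h1.sub (hasDerivAt_id x)).add_const 1).sub h3
  refine this.congr_deriv ?_
  unfold Gphi
  field_simp
  ring

lemma hasDerivAt_Gphi {x : ℝ} (hx : 0 < x) : HasDerivAt Gphi (x⁻¹ - 27/(x+2)^3) x := by
  have h2 : (2*(x+2)^2) ≠ 0 := by positivity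
  have h3 : HasDerivAt (fun x : ℝ => 3*(x-1)*(x+5)/(2*(x+2)^2))
      (((3*(x+5) + 3*(x-1)) * (2*(x+2)^2) - 3*(x-1)*(x+5) * (2*(2*(x+2)))) / (2*(x+2)^2)^2) x := by
    have hn : HasDerivAt (fun x : ℝ => 3*(x-1)*(x+5)) (3*(x+5) + 3*(x-1)) x := by
      have ha : HasDerivAt (fun x : ℝ => 3*(x-1)) 3 x := by
        simpa using ((hasDerivAt_id x).sub_const 1).const_mul 3
      have hb : HasDerivAt (fun x : ℝ => x+5) 1 x := (hasDerivAt_id x).add_const 5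
      have := ha.mul hb
      refine this.congr_deriv ?_ <;> simp <;> ring
    have hd : HasDerivAt (fun x : ℝ => 2*(x+2)^2) (2*(2*(x+2))) x := by
      have := (((hasDerivAt_id x).add_const 2).pow 2).const_mul 2
      refine this.congr_deriv ?_ <;> simp <;> ring
    exact hn.div hd h2
  have := (Real.hasDerivAt_log hx.ne').sub h3
  refine this.congr_deriv ?_
  have hx2 : (x+2) ≠ 0 := by positivity
  field_simp
  ring

lemma Gphi_nonneg_of_one_le {x : ℝ} (hx : 1 ≤ x) : 0 ≤ Gphi x := by
  have hmono : MonotoneOn Gphi (Set.Ioi 0) := by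
    apply monotoneOn_of_deriv_nonneg (convex_Ioi 0)
    · exact fun y hy => (hasDerivAt_Gphi hy).continuousAt.continuousWithinAt
    · intro y hy
      rw [interior_Ioi] at hy
      exact (hasDerivAt_Gphi hy).differentiableAt.differentiableWithinAt
    · intro y hy
      rw [interior_Ioi] at hy
      rw [(hasDerivAt_Gphi hy).deriv]
      have h1 : (0:ℝ) < y := hy
      have h2 : (0:ℝ) < (y+2)^3 := by positivity
      have key : 27 * y ≤ (y+2)^3 := by nlinarith [mul_nonneg (sq_nonneg (y-1)) (by linarith : (0:ℝ) ≤ y + 8)]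
      have : 27/(y+2)^3 ≤ y⁻¹ := by
        rw [div_le_iff₀ h2, inv_mul_eq_div, le_div_iff₀ h1]
        linarith
      linarith
  have hG1 : Gphi 1 = 0 := by unfold Gphi; norm_num
  have := hmono (Set.mem_Ioi.2 one_pos) (Set.mem_Ioi.2 (by linarith)) hx
  linarith

lemma Gphi_nonpos_of_le_one {x : ℝ} (hx0 : 0 < x) (hx : x ≤ 1) : Gphi x ≤ 0 := by
  have hmono : MonotoneOn Gphi (Set.Ioi 0) := by
    apply monotoneOn_of_deriv_nonneg (convex_Ioi 0)
    · exact fun y hy => (hasDerivAt_Gphi hy).continuousAt.continuousWithinAt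
    · intro y hy
      rw [interior_Ioi] at hy
      exact (hasDerivAt_Gphi hy).differentiableAt.differentiableWithinAt
    · intro y hy
      rw [interior_Ioi] at hy
      rw [(hasDerivAt_Gphi hy).deriv]
      have h1 : (0:ℝ) < y := hy
      have h2 : (0:ℝ) < (y+2)^3 := by positivity
      have key : 27 * y ≤ (y+2)^3 := by nlinarith [mul_nonneg (sq_nonneg (y-1)) (by linarith : (0:ℝ) ≤ y + 8)]
      have : 27/(y+2)^3 ≤ y⁻¹ := by
        rw [div_le_iff₀ h2, inv_mul_eq_div, le_div_iff₀ h1]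
        linarith
      linarith
  have hG1 : Gphi 1 = 0 := by unfold Gphi; norm_num
  have := hmono (Set.mem_Ioi.2 hx0) (Set.mem_Ioi.2 one_pos) hx
  linarith

lemma Fphi_nonneg {x : ℝ} (hx : 0 < x) : 0 ≤ Fphi x := by
  have hF1 : Fphi 1 = 0 := by unfold Fphi; norm_num
  rcases le_total 1 x with h | h
  · have hmono : MonotoneOn Fphi (Set.Ici 1) := by
      apply monotoneOn_of_deriv_nonneg (convex_Ici 1)
      · exact fun y hy => (hasDerivAt_Fphi (by exact lt_of_lt_of_le one_pos hy)).continuousAt.continuousWithinAt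
      · intro y hy
        rw [interior_Ici] at hy
        exact (hasDerivAt_Fphi (lt_trans one_pos hy)).differentiableAt.differentiableWithinAt
      · intro y hy
        rw [interior_Ici] at hy
        rw [(hasDerivAt_Fphi (lt_trans one_pos hy)).deriv]
        exact Gphi_nonneg_of_one_le (le_of_lt hy)
    have := hmono (Set.mem_Ici.2 le_rfl) (Set.mem_Ici.2 h) h
    linarith
  · have hanti : AntitoneOn Fphi (Set.Ioc 0 1) := by
      apply antitoneOn_of_deriv_nonpos (convex_Ioc 0 1)
      · exact fun y hy => (hasDerivAt_Fphi hy.1).continuousAt.continuousWithinAt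
      · intro y hy
        rw [interior_Ioc] at hy
        exact (hasDerivAt_Fphi hy.1).differentiableAt.differentiableWithinAt
      · intro y hy
        rw [interior_Ioc] at hy
        rw [(hasDerivAt_Fphi hy.1).deriv]
        exact Gphi_nonpos_of_le_one hy.1 (le_of_lt hy.2)
    have := hanti (Set.mem_Ioc.2 ⟨hx, h⟩) (Set.mem_Ioc.2 ⟨one_pos, le_rfl⟩) h
    linarith



lemma pinsker_term {p q : ℝ} (hq : 0 < q) (hp : 0 ≤ p) :
    3*(p - q)^2/(2*(p + 2*q)) ≤ p * Real.log (p / q) - p + q := by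
  rcases eq_or_lt_of_le hp with h0 | h0
  · rw [← h0]
    have e : (3:ℝ)*(0 - q)^2/(2*(0 + 2*q)) = 3*q/4 := by
      field_simp; ring
    rw [e]; simp; linarith
  · have hx : 0 < p / q := div_pos h0 hq
    have hF := Fphi_nonneg hx
    unfold Fphi at hF
    set L := Real.log (p / q) with hL
    have hq' : q ≠ 0 := hq.ne'
    have hpq : p + 2*q ≠ 0 := by positivity
    have h3 : p/q + 2 ≠ 0 := by positivity
    have e1 : q * (3*((p/q)-1)^2/(2*((p/q)+2))) = 3*(p - q)^2/(2*(p + 2*q)) := by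
      field_simp
    have e2 : q * ((p/q)*L - (p/q) + 1) = p * L - p + q := by
      field_simp
    nlinarith [mul_le_mul_of_nonneg_left hF hq.le]

lemma pinsker_fin {A : Type*} [Fintype A] (p q : A → ℝ) (hq : ∀ a, 0 < q a)
    (hp : ∀ a, 0 ≤ p a) (hps : ∑ a, p a = 1) (hqs : ∑ a, q a = 1) :
    (∑ a, |p a - q a|)^2 ≤ 2 * ∑ a, p a * Real.log (p a / q a) := by
  have hw : ∀ a, (0:ℝ) < p a + 2 * q a := fun a => by have := hp a; have := hq a; linarith
  have hsum3 : ∑ a, (p a + 2 * q a) = 3 := by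
    rw [Finset.sum_add_distrib, hps, ← Finset.mul_sum, hqs]; norm_num
  have hsed := sq_sum_div_le_sum_sq_div Finset.univ (fun a => |p a - q a|)
      (g := fun a => p a + 2 * q a) (fun a _ => hw a)
  rw [hsum3] at hsed
  simp only [sq_abs] at hsed
  -- t := ∑ (p-q)^2/(p+2q)
  have hS : ∑ a, (p a - q a)^2 / (p a + 2*q a)
      ≤ (2/3) * ∑ a, p a * Real.log (p a / q a) := by
    have h1 : ∀ a, (2/3) * (p a * Real.log (p a / q a) - p a + q a)
        ≥ (p a - q a)^2 / (p a + 2*q a) := by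
      intro a
      have := pinsker_term (hq a) (hp a)
      have hne : p a + 2*q a ≠ 0 := (hw a).ne'
      have e : (p a - q a)^2 / (p a + 2*q a) = (2/3) * (3*(p a - q a)^2/(2*(p a + 2*q a))) := by
        rw [div_mul_div_comm, div_eq_div_iff hne (mul_ne_zero three_ne_zero (mul_ne_zero two_ne_zero hne))]
        ring
      rw [e]
      linarith
    calc ∑ a, (p a - q a)^2 / (p a + 2*q a)
        ≤ ∑ a, (2/3) * (p a * Real.log (p a / q a) - p a + q a) :=
          Finset.sum_le_sum (fun a _ => h1 a)
      _ = (2/3) * ∑ a, p a * Real.log (p a / q a) := by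
          rw [← Finset.mul_sum]
          congr 1
          rw [Finset.sum_add_distrib, Finset.sum_sub_distrib, hps, hqs]
          ring
  have hD2 : (∑ a, |p a - q a|)^2 ≤ 3 * ∑ a, (p a - q a)^2 / (p a + 2*q a) := by
    rw [div_le_iff₀ (by norm_num : (0:ℝ) < 3)] at hsed
    linarith
  linarith

lemma sqrt_le_one_add {y : ℝ} (hy : 0 ≤ y) : Real.sqrt y ≤ 1 + y := by
  nlinarith [Real.sq_sqrt hy, Real.sqrt_nonneg y, sq_nonneg (Real.sqrt y - 1)]

lemma sqrt_tangent {y I : ℝ} (hy : 0 ≤ y) (hI : 0 < I) :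
    Real.sqrt y ≤ Real.sqrt I + (y - I) / (2 * Real.sqrt I) := by
  have hsI : 0 < Real.sqrt I := Real.sqrt_pos.2 hI
  rw [← sub_le_iff_le_add', le_div_iff₀ (by positivity)]
  nlinarith [sq_nonneg (Real.sqrt y - Real.sqrt I), Real.sq_sqrt hy, Real.sq_sqrt hI.le]

end Aux

/-- Hölder + Pinsker + Jensen chain: for policies `π, π'` over a finite action set and
`f` with values in `[0, V]`,
`E_{s∼μ}[Σ_a f(s,a)(π'(a|s) − π(a|s))] ≤ V·sqrt((1/2)·E_{s∼μ}[KL(π'(·|s)‖π(·|s))])`. -/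
theorem holder_pinsker_jensen {S A : Type*} [MeasurableSpace S] [Fintype A]
    (μ : Measure S) [IsProbabilityMeasure μ]
    (π π' : S → A → ℝ) (f : S → A → ℝ) (V : ℝ) (hV : 0 ≤ V)
    (hπpos : ∀ s a, 0 < π s a) (hπsum : ∀ s, ∑ a, π s a = 1)
    (hπ'nonneg : ∀ s a, 0 ≤ π' s a) (hπ'sum : ∀ s, ∑ a, π' s a = 1)
    (hf : ∀ s a, f s a ∈ Set.Icc (0:ℝ) V)
    (hint1 : Integrable (fun s => ∑ a, f s a * (π' s a - π s a)) μ)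
    (hint2 : Integrable (fun s => ∑ a, π' s a * Real.log (π' s a / π s a)) μ) :
    ∫ s, (∑ a, f s a * (π' s a - π s a)) ∂μ
      ≤ V * Real.sqrt ((1 / 2) * ∫ s, (∑ a, π' s a * Real.log (π' s a / π s a)) ∂μ) := by
  set k : S → ℝ := fun s => ∑ a, π' s a * Real.log (π' s a / π s a) with hk
  -- pointwise facts
  have hpin : ∀ s, (∑ a, |π' s a - π s a|)^2 ≤ 2 * k s := fun s =>
    pinsker_fin (π' s) (π s) (hπpos s) (hπ'nonneg s) (hπ'sum s) (hπsum s)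
  have hknn : ∀ s, 0 ≤ k s := by
    intro s
    have := hpin s
    nlinarith [sq_nonneg (∑ a, |π' s a - π s a|)]
  -- pointwise Hölder + Pinsker
  have hpt : ∀ s, (∑ a, f s a * (π' s a - π s a)) ≤ V * Real.sqrt (k s / 2) := by
    intro s
    set D := ∑ a, |π' s a - π s a| with hD
    have hDnn : 0 ≤ D := Finset.sum_nonneg (fun a _ => abs_nonneg _)
    have hzero : ∑ a, (π' s a - π s a) = 0 := by
      rw [Finset.sum_sub_distrib, hπ'sum, hπsum]; ring
    have h1 : (∑ a, f s a * (π' s a - π s a)) ≤ (V/2) * D := by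
      have e : (∑ a, f s a * (π' s a - π s a))
          = ∑ a, (f s a - V/2) * (π' s a - π s a) := by
        have : ∑ a, f s a * (π' s a - π s a)
            = (∑ a, (f s a - V/2) * (π' s a - π s a)) + (V/2) * ∑ a, (π' s a - π s a) := by
          rw [Finset.mul_sum, ← Finset.sum_add_distrib]
          exact Finset.sum_congr rfl (fun a _ => by ring)
        rw [this, hzero]; ring
      rw [e, hD, Finset.mul_sum]
      apply Finset.sum_le_sum
      intro a _
      have hfa := hf s a
      have habs : |f s a - V/2| ≤ V/2 := abs_le.2 ⟨by linarith [hfa.1], by linarith [hfa.2]⟩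
      calc (f s a - V/2) * (π' s a - π s a) ≤ |(f s a - V/2) * (π' s a - π s a)| := le_abs_self _
        _ = |f s a - V/2| * |π' s a - π s a| := abs_mul _ _
        _ ≤ (V/2) * |π' s a - π s a| := mul_le_mul_of_nonneg_right habs (abs_nonneg _)
    have h2 : D ≤ Real.sqrt (2 * k s) := by
      have := Real.sqrt_le_sqrt (hpin s)
      rwa [Real.sqrt_sq hDnn] at this
    have h3 : Real.sqrt (2 * k s) = 2 * Real.sqrt (k s / 2) := by
      rw [show 2 * k s = 2^2 * (k s / 2) by ring, Real.sqrt_mul (by positivity),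
        Real.sqrt_sq (by norm_num)]
    calc (∑ a, f s a * (π' s a - π s a)) ≤ (V/2) * D := h1
      _ ≤ (V/2) * Real.sqrt (2 * k s) := mul_le_mul_of_nonneg_left h2 (by linarith)
      _ = V * Real.sqrt (k s / 2) := by rw [h3]; ring
  -- integrability of the bound
  have hmeas2 : AEStronglyMeasurable (fun s => k s / 2) μ := by
    simpa [div_eq_mul_inv] using hint2.aestronglyMeasurable.mul_const (2:ℝ)⁻¹
  have hmeas : AEStronglyMeasurable (fun s => Real.sqrt (k s / 2)) μ :=
    Real.continuous_sqrt.comp_aestronglyMeasurable hmeas2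
  have hBint : Integrable (fun s => Real.sqrt (k s / 2)) μ := by
    have hgint : Integrable (fun s => 1 + k s / 2) μ := (integrable_const 1).add (hint2.div_const 2)
    refine Integrable.mono hgint hmeas ?_
    filter_upwards with s
    have h1 : (0:ℝ) ≤ 1 + k s / 2 := by have := hknn s; positivity
    rw [Real.norm_eq_abs, Real.norm_eq_abs, abs_of_nonneg (Real.sqrt_nonneg _), abs_of_nonneg h1]
    exact sqrt_le_one_add (by have := hknn s; positivity)
  -- first integral inequality
  have step1 : ∫ s, (∑ a, f s a * (π' s a - π s a)) ∂μ
      ≤ ∫ s, V * Real.sqrt (k s / 2) ∂μ :=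
    integral_mono hint1 (hBint.const_mul V) hpt
  rw [integral_const_mul] at step1
  -- Jensen for sqrt
  set I : ℝ := (1/2) * ∫ s, k s ∂μ with hI
  have hInn : 0 ≤ I := by
    have : 0 ≤ ∫ s, k s ∂μ := integral_nonneg hknn
    rw [hI]; linarith
  have hhalf : ∫ s, k s / 2 ∂μ = I := by
    rw [hI, integral_div]; ring
  have step2 : ∫ s, Real.sqrt (k s / 2) ∂μ ≤ Real.sqrt I := by
    rcases eq_or_lt_of_le hInn with h0 | h0
    · have hzero : ∫ s, k s / 2 ∂μ = 0 := by rw [hhalf, ← h0]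
      have hae : (fun s => k s / 2) =ᵐ[μ] 0 := by
        refine (integral_eq_zero_iff_of_nonneg ?_ (hint2.div_const 2)).1 hzero
        intro s; have := hknn s; positivity
      have : (fun s => Real.sqrt (k s / 2)) =ᵐ[μ] 0 := by
        filter_upwards [hae] with s hs
        simp only [Pi.zero_apply] at hs ⊢
        rw [hs, Real.sqrt_zero]
      rw [integral_congr_ae this]
      simp [← h0]
    · have hpt2 : ∀ s, Real.sqrt (k s / 2)
          ≤ Real.sqrt I + (k s / 2 - I) / (2 * Real.sqrt I) := by
        intro s
        exact sqrt_tangent (by have := hknn s; positivity) h0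
      have hsub : Integrable (fun s => (k s / 2 - I) / (2 * Real.sqrt I)) μ :=
        ((hint2.div_const 2).sub (integrable_const I)).div_const _
      have hint3 : Integrable (fun s => Real.sqrt I + (k s / 2 - I) / (2 * Real.sqrt I)) μ :=
        (integrable_const _).add hsub
      have := integral_mono hBint hint3 hpt2
      calc ∫ s, Real.sqrt (k s / 2) ∂μ
          ≤ ∫ s, (Real.sqrt I + (k s / 2 - I) / (2 * Real.sqrt I)) ∂μ := this
        _ = Real.sqrt I := by
            rw [integral_add (integrable_const _) hsub,
              integral_const, integral_div, integral_sub (hint2.div_const 2) (integrable_const I),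
              integral_const, hhalf]
            simp [measure_univ]
      -- done
  calc ∫ s, (∑ a, f s a * (π' s a - π s a)) ∂μ ≤ V * ∫ s, Real.sqrt (k s / 2) ∂μ := step1
    _ ≤ V * Real.sqrt I := mul_le_mul_of_nonneg_left step2 hV
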